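/- The distribution of the descent number over permutations of S_n equals the distribution of the excedance number: Σ_{σ ∈ S_n} t^{des(σ)} = Σ_{σ ∈ S_n} t^{exc(σ)} for all n ≥ 1. -/
import Mathlib


open Finset Polynomial

open scoped Classical

noncomputable section

/-- The value of `σ` at 0-based position `i`, as a natural number (0-based values). -/
def pv (n : ℕ) (σ : Equiv.Perm (Fin n)) (i : ℕ) : ℕ :=
  if h : i < n then (σ ⟨i, h⟩ : ℕ) else 0

/-- Descent set of `σ` in 0-based positions: `i` with `σ(i) > σ(i+1)`. -/
def desSet (n : ℕ) (σ : Equiv.Perm (Fin n)) : Finset ℕ :=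
  (Finset.range (n - 1)).filter fun i => pv n σ (i + 1) < pv n σ i

def desNum (n : ℕ) (σ : Equiv.Perm (Fin n)) : ℕ := (desSet n σ).card

/-- Major index: the sum of the (1-based) descent positions. -/
def majNum (n : ℕ) (σ : Equiv.Perm (Fin n)) : ℕ := ∑ i ∈ desSet n σ, (i + 1)

/-- Excedance number. -/
def excNum (n : ℕ) (σ : Equiv.Perm (Fin n)) : ℕ :=
  ((Finset.range n).filter fun i => i < pv n σ i).card

/-- Inversion number. -/
def invNum (n : ℕ) (σ : Equiv.Perm (Fin n)) : ℕ :=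
  (((Finset.range n) ×ˢ (Finset.range n)).filter fun p =>
    p.1 < p.2 ∧ pv n σ p.2 < pv n σ p.1).card

/-- `σ` has a double descent: `σ(i) > σ(i+1) > σ(i+2)` for some valid `i`. -/
def HasDoubleDescent (n : ℕ) (σ : Equiv.Perm (Fin n)) : Prop :=
  ∃ i, i + 2 < n ∧ pv n σ (i + 2) < pv n σ (i + 1) ∧ pv n σ (i + 1) < pv n σ i

/-- `σ` has a final descent: `σ(n-1) > σ(n)` (1-based). -/
def HasFinalDescent (n : ℕ) (σ : Equiv.Perm (Fin n)) : Prop :=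
  2 ≤ n ∧ pv n σ (n - 1) < pv n σ (n - 2)

/-- `σ` has an initial descent: `σ(1) > σ(2)` (1-based). -/
def HasInitialDescent (n : ℕ) (σ : Equiv.Perm (Fin n)) : Prop :=
  2 ≤ n ∧ pv n σ 1 < pv n σ 0

/-- The Eulerian polynomial `A_n(t) = ∑_{σ ∈ S_n} t^{des σ}`. -/
def eulerPoly (n : ℕ) : Polynomial ℤ :=
  ∑ σ : Equiv.Perm (Fin n), X ^ desNum n σ

/-- The binomial-Eulerian polynomial `Ã_n(t) = 1 + t ∑_{m=1}^n C(n,m) A_m(t)`. -/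
def binEulerPoly (n : ℕ) : Polynomial ℤ :=
  1 + X * ∑ m ∈ Finset.Icc 1 n, (n.choose m : Polynomial ℤ) * eulerPoly m

/-- insertion of max at position p -/
def ins (n : ℕ) (τ : Equiv.Perm (Fin n)) (p : Fin (n+1)) : Equiv.Perm (Fin (n+1)) :=
  (finSuccEquiv' p).trans ((Equiv.optionCongr τ).trans (finSuccEquiv' (Fin.last n)).symm)

lemma ins_apply_at (n : ℕ) (τ : Equiv.Perm (Fin n)) (p : Fin (n+1)) :
    ins n τ p p = Fin.last n := by
  simp [ins, finSuccEquiv'_at, finSuccEquiv'_symm_none]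

lemma ins_apply_succAbove (n : ℕ) (τ : Equiv.Perm (Fin n)) (p : Fin (n+1)) (k : Fin n) :
    ins n τ p (p.succAbove k) = (τ k).castSucc := by
  simp [ins, finSuccEquiv'_succAbove, finSuccEquiv'_symm_some, Fin.succAbove_last]

lemma pv_ins_at (n : ℕ) (τ : Equiv.Perm (Fin n)) (p : Fin (n+1)) :
    pv (n+1) (ins n τ p) p.val = n := by
  have h : p.val < n + 1 := p.isLt
  simp only [pv, dif_pos h]
  have : (⟨p.val, h⟩ : Fin (n+1)) = p := by ext; rfl
  rw [this, ins_apply_at]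
  rfl

lemma pv_ins_below (n : ℕ) (τ : Equiv.Perm (Fin n)) (p : Fin (n+1)) (j : ℕ) (h : j < p.val) :
    pv (n+1) (ins n τ p) j = pv n τ j := by
  have hn : j < n := by have := p.isLt; omega
  have h1 : j < n + 1 := by omega
  simp only [pv, dif_pos h1, dif_pos hn]
  have hc : Fin.castSucc (⟨j, hn⟩ : Fin n) < p := by
    simp [Fin.lt_def, h]
  have : (⟨j, h1⟩ : Fin (n+1)) = p.succAbove ⟨j, hn⟩ := by
    rw [Fin.succAbove_of_castSucc_lt _ _ hc]; rfl
  rw [this, ins_apply_succAbove]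
  rfl

lemma pv_ins_above (n : ℕ) (τ : Equiv.Perm (Fin n)) (p : Fin (n+1)) (j : ℕ)
    (h1 : p.val < j) (h2 : j ≤ n) : pv (n+1) (ins n τ p) j = pv n τ (j-1) := by
  have hn : j - 1 < n := by omega
  have hj : j < n + 1 := by omega
  simp only [pv, dif_pos hj, dif_pos hn]
  have hc : p ≤ Fin.castSucc (⟨j - 1, hn⟩ : Fin n) := by
    simp [Fin.le_def]; omega
  have : (⟨j, hj⟩ : Fin (n+1)) = p.succAbove ⟨j - 1, hn⟩ := by
    rw [Fin.succAbove_of_le_castSucc _ _ hc]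
    simp [Fin.succ]; omega
  rw [this, ins_apply_succAbove]
  rfl

lemma pv_lt_n (n : ℕ) (τ : Equiv.Perm (Fin n)) (j : ℕ) (h : j < n) : pv n τ j < n := by
  simp only [pv, dif_pos h]; exact (τ ⟨j, h⟩).isLt

lemma mem_desSet_ins (n : ℕ) (τ : Equiv.Perm (Fin n)) (p : Fin (n+1)) (i : ℕ) :
    i ∈ desSet (n+1) (ins n τ p) ↔
      (i = p.val ∧ i < n) ∨ (i + 1 < p.val ∧ i ∈ desSet n τ) ∨
      (p.val < i ∧ i < n ∧ i - 1 ∈ desSet n τ) := by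
  have hP : p.val ≤ n := Nat.lt_succ_iff.mp p.isLt
  simp only [desSet, mem_filter, mem_range, Nat.add_sub_cancel]
  rcases Nat.lt_trichotomy (i+1) p.val with h1 | h1 | h1
  · rw [pv_ins_below n τ p i (by omega), pv_ins_below n τ p (i+1) h1]
    omega
  · -- i + 1 = P : never a descent
    have hi : i < p.val := by omega
    have hat : pv (n+1) (ins n τ p) (i+1) = n := by rw [h1]; exact pv_ins_at n τ p
    rw [pv_ins_below n τ p i hi, hat]
    have := pv_lt_n n τ i (by omega)
    omega
  · have hPi : p.val ≤ i := by omega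
    rcases Nat.eq_or_lt_of_le hPi with hPe | hPl
    · by_cases hin : i < n
      · have hat : pv (n+1) (ins n τ p) i = n := by rw [← hPe]; exact pv_ins_at n τ p
        rw [hat, pv_ins_above n τ p (i+1) (by omega) (by omega)]
        simp only [Nat.add_sub_cancel]
        have := pv_lt_n n τ i hin
        omega
      · have h2 : ¬ (i + 1 ≤ n) := by omega
        constructor
        · rintro ⟨h, -⟩; omega
        · rintro (⟨-, h⟩ | ⟨h, -⟩ | ⟨h, -, -⟩) <;> omega
    · obtain ⟨j, rfl⟩ : ∃ j, i = j + 1 := ⟨i - 1, by omega⟩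
      by_cases hin : j + 1 < n
      · rw [pv_ins_above n τ p (j+1) hPl (by omega),
            pv_ins_above n τ p (j+1+1) (by omega) (by omega)]
        simp only [Nat.add_sub_cancel]
        omega
      · constructor
        · rintro ⟨h, -⟩; omega
        · rintro (⟨-, h⟩ | ⟨h, -⟩ | ⟨-, h, -⟩) <;> omega

lemma desSet_subset (n : ℕ) (τ : Equiv.Perm (Fin n)) : ∀ j ∈ desSet n τ, j < n - 1 := by
  intro j hj
  simpa [desSet] using (Finset.mem_filter.mp hj).1

lemma desNum_ins (n : ℕ) (τ : Equiv.Perm (Fin n)) (p : Fin (n+1)) :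
    desNum (n+1) (ins n τ p) =
      if p.val = n ∨ (0 < p.val ∧ p.val - 1 ∈ desSet n τ) then desNum n τ
      else desNum n τ + 1 := by
  have hP : p.val ≤ n := Nat.lt_succ_iff.mp p.isLt
  have hb := desSet_subset n τ
  have hE : desSet (n+1) (ins n τ p) =
      ((if p.val < n then {p.val} else ∅) ∪
        (desSet n τ).filter (fun j => j + 1 < p.val)) ∪
      ((desSet n τ).filter (fun j => p.val ≤ j)).image (fun j => j + 1) := by
    ext i
    simp only [mem_desSet_ins, mem_union, mem_filter, mem_image, Finset.mem_singleton]
    constructor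
    · rintro (⟨rfl, hn⟩ | ⟨h1, h2⟩ | ⟨h1, h2, h3⟩)
      · exact Or.inl (Or.inl (by simp [hn]))
      · exact Or.inl (Or.inr ⟨h2, h1⟩)
      · exact Or.inr ⟨i - 1, ⟨h3, by omega⟩, by omega⟩
    · rintro ((h | ⟨h1, h2⟩) | ⟨j, ⟨hj1, hj2⟩, rfl⟩)
      · split at h
        · simp only [Finset.mem_singleton] at h
          exact Or.inl ⟨h, by omega⟩
        · simp at h
      · exact Or.inr (Or.inl ⟨h2, h1⟩)
      · have := hb j hj1
        exact Or.inr (Or.inr ⟨by omega, by omega, by simpa using hj1⟩)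
  have hd1 : Disjoint (if p.val < n then ({p.val} : Finset ℕ) else ∅)
      ((desSet n τ).filter (fun j => j + 1 < p.val)) := by
    rw [Finset.disjoint_left]
    intro a ha ha2
    have h2 := (Finset.mem_filter.mp ha2).2
    split at ha
    · simp only [Finset.mem_singleton] at ha; omega
    · simp at ha
  have hd2 : Disjoint ((if p.val < n then ({p.val} : Finset ℕ) else ∅) ∪
        (desSet n τ).filter (fun j => j + 1 < p.val))
      (((desSet n τ).filter (fun j => p.val ≤ j)).image (fun j => j + 1)) := by
    rw [Finset.disjoint_left]
    intro a ha ha2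
    obtain ⟨j, hj, hji⟩ := Finset.mem_image.mp ha2
    have hji' : j + 1 = a := hji
    have hj2 := (Finset.mem_filter.mp hj).2
    rcases Finset.mem_union.mp ha with h | h
    · split at h
      · simp only [Finset.mem_singleton] at h; omega
      · simp at h
    · have := (Finset.mem_filter.mp h).2; omega
  have hinj : Function.Injective (fun j : ℕ => j + 1) := fun a b h => Nat.succ_injective h
  have hcard : desNum (n+1) (ins n τ p) =
      (if p.val < n then 1 else 0) + ((desSet n τ).filter (fun j => j + 1 < p.val)).card
        + ((desSet n τ).filter (fun j => p.val ≤ j)).card := by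
    rw [desNum, hE, Finset.card_union_of_disjoint hd2, Finset.card_union_of_disjoint hd1,
      Finset.card_image_of_injective _ hinj]
    congr 1
    · congr 1
      split <;> simp
  -- partition of desSet n τ
  have hmid : (desSet n τ).filter (fun j => j + 1 = p.val) =
      if 0 < p.val ∧ p.val - 1 ∈ desSet n τ then {p.val - 1} else ∅ := by
    ext j
    simp only [mem_filter]
    split
    · rename_i hc
      simp only [Finset.mem_singleton]
      constructor
      · rintro ⟨-, h⟩; omega
      · rintro rfl; exact ⟨hc.2, by omega⟩
    · rename_i hc
      simp only [Finset.notMem_empty, iff_false]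
      rintro ⟨h1, h2⟩
      exact hc ⟨by omega, by rwa [show p.val - 1 = j by omega]⟩
  have hsplit : ((desSet n τ).filter (fun j => j + 1 < p.val)).card
      + ((desSet n τ).filter (fun j => j + 1 = p.val)).card
      + ((desSet n τ).filter (fun j => p.val ≤ j)).card = desNum n τ := by
    have A := Finset.card_filter_add_card_filter_not
      (s := desSet n τ) (p := fun j => j + 1 < p.val)
    have B := Finset.card_filter_add_card_filter_not
      (s := (desSet n τ).filter (fun j => ¬ (j + 1 < p.val))) (p := fun j => j + 1 = p.val)
    have C1 : ((desSet n τ).filter (fun j => ¬ (j + 1 < p.val))).filter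
        (fun j => j + 1 = p.val) = (desSet n τ).filter (fun j => j + 1 = p.val) := by
      rw [Finset.filter_filter]
      exact Finset.filter_congr (fun x _ => by omega)
    have C2 : ((desSet n τ).filter (fun j => ¬ (j + 1 < p.val))).filter
        (fun j => ¬ (j + 1 = p.val)) = (desSet n τ).filter (fun j => p.val ≤ j) := by
      rw [Finset.filter_filter]
      exact Finset.filter_congr (fun x _ => by omega)
    rw [C1, C2] at B
    unfold desNum
    omega
  have hPn : p.val = n → ¬ (0 < p.val ∧ p.val - 1 ∈ desSet n τ) := by
    rintro hpe ⟨h1, h2⟩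
    have := hb _ h2; omega
  rw [hcard]
  by_cases hs : 0 < p.val ∧ p.val - 1 ∈ desSet n τ
  · rw [hmid, if_pos hs] at hsplit
    simp only [Finset.card_singleton] at hsplit
    have hpn : p.val < n := by
      rcases Nat.eq_or_lt_of_le hP with h | h
      · exact absurd hs (hPn h)
      · exact h
    rw [if_pos (Or.inr hs), if_pos hpn]
    omega
  · rw [hmid, if_neg hs] at hsplit
    simp only [Finset.card_empty] at hsplit
    by_cases hpn : p.val = n
    · have h2 : ¬ (p.val < n) := by omega
      rw [if_pos (Or.inl hpn), if_neg h2]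
      omega
    · have hneg : ¬ (p.val = n ∨ (0 < p.val ∧ p.val - 1 ∈ desSet n τ)) := by
        rintro (h | h)
        · exact hpn h
        · exact hs h
      have h2 : p.val < n := by omega
      rw [if_neg hneg, if_pos h2]
      omega

/-- cycle-type insertion: `n ↦ old value of i`, `i ↦ n`. -/
def insE (n : ℕ) (τ : Equiv.Perm (Fin n)) (i : Fin (n+1)) : Equiv.Perm (Fin (n+1)) :=
  ins n τ (Fin.last n) * Equiv.swap i (Fin.last n)

lemma ins_last_castSucc (n : ℕ) (τ : Equiv.Perm (Fin n)) (k : Fin n) :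
    ins n τ (Fin.last n) k.castSucc = (τ k).castSucc := by
  have := ins_apply_succAbove n τ (Fin.last n) k
  rwa [Fin.succAbove_last] at this

lemma pv_insE_ne (n : ℕ) (τ : Equiv.Perm (Fin n)) (i : Fin (n+1)) (k : ℕ)
    (hk : k < n) (hki : k ≠ i.val) : pv (n+1) (insE n τ i) k = pv n τ k := by
  have hk1 : k < n + 1 := by omega
  simp only [pv, dif_pos hk1, dif_pos hk]
  have h1 : (⟨k, hk1⟩ : Fin (n+1)) ≠ i := by
    intro h; apply hki; rw [← h]
  have h2 : (⟨k, hk1⟩ : Fin (n+1)) ≠ Fin.last n := by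
    intro h; have := congrArg Fin.val h; simp at this; omega
  have : insE n τ i ⟨k, hk1⟩ = ins n τ (Fin.last n) ⟨k, hk1⟩ := by
    simp only [insE, Equiv.Perm.mul_apply]
    rw [Equiv.swap_apply_of_ne_of_ne h1 h2]
  rw [this]
  have hcs : (⟨k, hk1⟩ : Fin (n+1)) = Fin.castSucc ⟨k, hk⟩ := rfl
  rw [hcs, ins_last_castSucc]
  rfl

lemma pv_insE_at (n : ℕ) (τ : Equiv.Perm (Fin n)) (i : Fin (n+1)) (hi : i.val < n) :
    pv (n+1) (insE n τ i) i.val = n := by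
  have hk1 : i.val < n + 1 := by omega
  simp only [pv, dif_pos hk1]
  have : (⟨i.val, hk1⟩ : Fin (n+1)) = i := by ext; rfl
  rw [this]
  simp only [insE, Equiv.Perm.mul_apply, Equiv.swap_apply_left]
  rw [ins_apply_at]
  rfl

lemma pv_le (n : ℕ) (σ : Equiv.Perm (Fin (n+1))) (j : ℕ) : pv (n+1) σ j ≤ n := by
  unfold pv
  split
  · exact Nat.lt_succ_iff.mp (σ _).isLt
  · omega

lemma excNum_insE (n : ℕ) (τ : Equiv.Perm (Fin n)) (i : Fin (n+1)) :
    excNum (n+1) (insE n τ i) =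
      if i.val = n ∨ i.val < pv n τ i.val then excNum n τ else excNum n τ + 1 := by
  have hI : i.val ≤ n := Nat.lt_succ_iff.mp i.isLt
  have hsplit : excNum (n+1) (insE n τ i) =
      ((Finset.range n).filter fun k => k < pv (n+1) (insE n τ i) k).card := by
    unfold excNum
    congr 1
    rw [Finset.range_add_one, Finset.filter_insert, if_neg (by have := pv_le n (insE n τ i) n; omega)]
  by_cases hin : i.val = n
  · rw [if_pos (Or.inl hin), hsplit]
    unfold excNum
    congr 1
    apply Finset.filter_congr
    intro k hk
    have hk' := Finset.mem_range.mp hk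
    rw [pv_insE_ne n τ i k hk' (by omega)]
  · have hi : i.val < n := by omega
    have hE : ((Finset.range n).filter fun k => k < pv (n+1) (insE n τ i) k) =
        insert i.val ((Finset.range n).filter fun k => k < pv n τ k) := by
      ext k
      simp only [Finset.mem_filter, Finset.mem_range, Finset.mem_insert]
      constructor
      · rintro ⟨hk, h2⟩
        by_cases hki : k = i.val
        · exact Or.inl hki
        · rw [pv_insE_ne n τ i k hk hki] at h2
          exact Or.inr ⟨hk, h2⟩
      · rintro (rfl | ⟨hk, h2⟩)
        · rw [pv_insE_at n τ i hi]
          exact ⟨hi, hi⟩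
        · by_cases hki : k = i.val
          · subst hki
            rw [pv_insE_at n τ i hi]
            exact ⟨hk, hi⟩
          · rw [pv_insE_ne n τ i k hk hki]
            exact ⟨hk, h2⟩
    rw [hsplit, hE]
    by_cases hmem : i.val < pv n τ i.val
    · rw [if_pos (Or.inr hmem)]
      rw [Finset.insert_eq_self.mpr (by simp [Finset.mem_filter, Finset.mem_range]; exact ⟨hi, hmem⟩)]
      rfl
    · rw [if_neg (by tauto), Finset.card_insert_of_notMem (by simp [Finset.mem_filter]; intro _; omega)]
      rfl

lemma ins_eq_last_iff (n : ℕ) (τ : Equiv.Perm (Fin n)) (p : Fin (n+1)) (x : Fin (n+1)) :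
    ins n τ p x = Fin.last n ↔ x = p := by
  constructor
  · intro h
    apply (ins n τ p).injective
    rw [h, ins_apply_at]
  · intro h; rw [h]; exact ins_apply_at n τ p

lemma ins_injective (n : ℕ) :
    Function.Injective (fun x : Equiv.Perm (Fin n) × Fin (n+1) => ins n x.1 x.2) := by
  rintro ⟨τ, p⟩ ⟨τ', p'⟩ h
  simp only at h
  have hp : p = p' := by
    have h1 : ins n τ' p' p = Fin.last n := by rw [← h]; exact ins_apply_at n τ p
    exact (ins_eq_last_iff n τ' p' p).mp h1
  subst hp
  have hτ : τ = τ' := by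
    apply Equiv.ext
    intro k
    have h1 : ins n τ p (p.succAbove k) = ins n τ' p (p.succAbove k) := by rw [h]
    rw [ins_apply_succAbove, ins_apply_succAbove] at h1
    exact Fin.castSucc_injective n h1
  rw [hτ]

lemma insE_injective (n : ℕ) :
    Function.Injective (fun x : Equiv.Perm (Fin n) × Fin (n+1) => insE n x.1 x.2) := by
  rintro ⟨τ, i⟩ ⟨τ', i'⟩ h
  simp only [insE] at h
  have hlast : ∀ (ρ : Equiv.Perm (Fin n)) (j : Fin (n+1)),
      (ins n ρ (Fin.last n) * Equiv.swap j (Fin.last n)) j = Fin.last n := by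
    intro ρ j
    simp only [Equiv.Perm.mul_apply, Equiv.swap_apply_left]
    exact ins_apply_at n ρ (Fin.last n)
  have hi : i = i' := by
    have h1 : (ins n τ' (Fin.last n) * Equiv.swap i' (Fin.last n)) i = Fin.last n := by
      rw [← h]; exact hlast τ i
    have h2 := hlast τ' i'
    exact (Equiv.injective _) (h1.trans h2.symm)
  subst hi
  have h3 : ins n τ (Fin.last n) = ins n τ' (Fin.last n) := mul_right_cancel h
  have := ins_injective n (a₁ := (τ, Fin.last n)) (a₂ := (τ', Fin.last n)) h3
  simp only [Prod.mk.injEq] at this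
  rw [this.1]

lemma card_aux (n : ℕ) : Fintype.card (Equiv.Perm (Fin n) × Fin (n+1)) =
    Fintype.card (Equiv.Perm (Fin (n+1))) := by
  simp [Fintype.card_perm, Nat.factorial_succ, mul_comm]

lemma filter_card_eq_sum {n : ℕ} (Φ : Equiv.Perm (Fin n) × Fin (n+1) → Equiv.Perm (Fin (n+1)))
    (hΦ : Function.Injective Φ) (f : Equiv.Perm (Fin (n+1)) → ℕ) (d : ℕ) :
    (univ.filter fun σ => f σ = d).card =
      ∑ τ : Equiv.Perm (Fin n), (univ.filter fun p : Fin (n+1) => f (Φ (τ, p)) = d).card := by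
  set P : Equiv.Perm (Fin (n+1)) → Prop := fun σ => f σ = d with hP
  have hbij : Function.Bijective Φ :=
    (Fintype.bijective_iff_injective_and_card Φ).mpr ⟨hΦ, card_aux n⟩
  have h1 : (univ.filter fun σ => P σ).card =
      (univ.filter fun x : Equiv.Perm (Fin n) × Fin (n+1) => P (Φ x)).card := by
    symm
    apply Finset.card_bij (fun x _ => Φ x)
    · intro x hx
      simp only [Finset.mem_filter, Finset.mem_univ, true_and] at hx ⊢
      exact hx
    · intro x _ y _ h
      exact hΦ h
    · intro σ hσ
      obtain ⟨x, rfl⟩ := hbij.2 σ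
      simp only [Finset.mem_filter, Finset.mem_univ, true_and] at hσ
      exact ⟨x, Finset.mem_filter.mpr ⟨Finset.mem_univ _, hσ⟩, rfl⟩
  rw [h1]
  rw [Finset.card_filter]
  rw [Fintype.sum_prod_type]
  congr 1
  ext τ
  rw [Finset.card_filter]

/-- generic fiber count -/
lemma count_fiber {n s : ℕ} (g : Fin (n+1) → ℕ) (Q : Fin (n+1) → Prop) [DecidablePred Q]
    (hg : ∀ x, g x = if Q x then s else s + 1)
    (hc : (univ.filter Q).card = s + 1) (d : ℕ) :
    (univ.filter fun x => g x = d).card =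
      (if s = d then s + 1 else if s + 1 = d then n - s else 0) := by
  have hle : s + 1 ≤ n + 1 := by
    calc s + 1 = (univ.filter Q).card := hc.symm
    _ ≤ (univ : Finset (Fin (n+1))).card := Finset.card_filter_le _ _
    _ = n + 1 := by simp
  by_cases h1 : s = d
  · rw [if_pos h1]
    have : (univ.filter fun x => g x = d) = univ.filter Q := by
      apply Finset.filter_congr
      intro x _
      rw [hg x]
      split
      · rename_i hq; simp [h1, hq]
      · rename_i hq; exact iff_of_false (by omega) hq
    rw [this, hc]
  · rw [if_neg h1]
    by_cases h2 : s + 1 = d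
    · rw [if_pos h2]
      have : (univ.filter fun x => g x = d) = univ.filter (fun x => ¬ Q x) := by
        apply Finset.filter_congr
        intro x _
        rw [hg x]
        split
        · rename_i hq; exact iff_of_false (by omega) (by simp [hq])
        · rename_i hq; simp [h2, hq]
      rw [this]
      have := Finset.card_filter_add_card_filter_not (s := (univ : Finset (Fin (n+1)))) (p := Q)
      rw [hc] at this
      simp only [Finset.card_univ, Fintype.card_fin] at this
      omega
    · rw [if_neg h2]
      rw [Finset.card_eq_zero]
      apply Finset.filter_eq_empty_iff.mpr
      intro x _
      rw [hg x]
      split <;> omega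

/-- card of good sets -/
lemma card_good {n : ℕ} (S : Finset ℕ) (hS : ∀ j ∈ S, j < n) :
    (univ.filter fun p : Fin (n+1) => p.val = n ∨ p.val ∈ S).card = S.card + 1 := by
  have : (univ.filter fun p : Fin (n+1) => p.val = n ∨ p.val ∈ S).card = (insert n S).card := by
    apply Finset.card_bij (fun p _ => p.val)
    · intro p hp
      simp only [Finset.mem_filter, Finset.mem_univ, true_and] at hp
      rcases hp with h | h
      · simp [h]
      · simp [Finset.mem_insert, h]
    · intro a _ b _ h
      exact Fin.val_injective h
    · intro x hx
      rcases Finset.mem_insert.mp hx with h | h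
      · exact ⟨Fin.last n, by simp, by simp [h]⟩
      · have hxn : x < n + 1 := by have := hS x h; omega
        exact ⟨⟨x, hxn⟩, by simp [h], rfl⟩
  rw [this, Finset.card_insert_of_notMem (fun h => by have := hS n h; omega)]

def Fc (n d s : ℕ) : ℕ := if s = d then s + 1 else if s + 1 = d then n - s else 0

lemma des_step (n d : ℕ) :
    (univ.filter fun σ : Equiv.Perm (Fin (n+1)) => desNum (n+1) σ = d).card =
      ∑ τ : Equiv.Perm (Fin n), Fc n d (desNum n τ) := by
  rw [filter_card_eq_sum (fun x => ins n x.1 x.2) (ins_injective n) (desNum (n+1)) d]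
  apply Finset.sum_congr rfl
  intro τ _
  have hc : (univ.filter fun p : Fin (n+1) =>
      p.val = n ∨ (0 < p.val ∧ p.val - 1 ∈ desSet n τ)).card = desNum n τ + 1 := by
    have hiff : ∀ p : Fin (n+1),
        (p.val = n ∨ (0 < p.val ∧ p.val - 1 ∈ desSet n τ)) ↔
        (p.val = n ∨ p.val ∈ (desSet n τ).image (· + 1)) := by
      intro p
      apply or_congr Iff.rfl
      simp only [Finset.mem_image]
      constructor
      · rintro ⟨h1, h2⟩; exact ⟨p.val - 1, h2, by omega⟩
      · rintro ⟨j, hj, hj2⟩; exact ⟨by omega, by rw [show p.val - 1 = j by omega]; exact hj⟩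
    have := card_good (n := n) ((desSet n τ).image (· + 1))
      (by intro j hj
          obtain ⟨k, hk, rfl⟩ := Finset.mem_image.mp hj
          have := desSet_subset n τ k hk
          omega)
    rw [Finset.card_image_of_injective _ (fun a b h => Nat.succ_injective h)] at this
    unfold desNum
    rw [← this]
    apply congrArg
    apply Finset.filter_congr
    intro p _
    exact hiff p
  exact count_fiber (fun p => desNum (n+1) (ins n τ p)) _
    (fun p => desNum_ins n τ p) hc d

lemma exc_step (n d : ℕ) :
    (univ.filter fun σ : Equiv.Perm (Fin (n+1)) => excNum (n+1) σ = d).card =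
      ∑ τ : Equiv.Perm (Fin n), Fc n d (excNum n τ) := by
  rw [filter_card_eq_sum (fun x => insE n x.1 x.2) (insE_injective n) (excNum (n+1)) d]
  apply Finset.sum_congr rfl
  intro τ _
  have hc : (univ.filter fun i : Fin (n+1) =>
      i.val = n ∨ i.val < pv n τ i.val).card = excNum n τ + 1 := by
    have hiff : ∀ i : Fin (n+1),
        (i.val = n ∨ i.val < pv n τ i.val) ↔
        (i.val = n ∨ i.val ∈ (Finset.range n).filter fun k => k < pv n τ k) := by
      intro i
      apply or_congr Iff.rfl
      simp only [Finset.mem_filter, Finset.mem_range]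
      constructor
      · intro h
        have hin : i.val < n := by
          by_contra hcon
          have hie : i.val = n := by have := i.isLt; omega
          rw [show pv n τ i.val = 0 by simp [pv, hie]] at h
          omega
        exact ⟨hin, h⟩
      · exact fun h => h.2
    have := card_good (n := n) ((Finset.range n).filter fun k => k < pv n τ k)
      (by intro j hj; exact Finset.mem_range.mp (Finset.mem_filter.mp hj).1)
    unfold excNum
    rw [← this]
    apply congrArg
    apply Finset.filter_congr
    intro p _
    exact hiff p
  exact count_fiber (fun i => excNum (n+1) (insE n τ i)) _
    (fun i => excNum_insE n τ i) hc d

lemma equid : ∀ n d : ℕ,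
    (univ.filter fun σ : Equiv.Perm (Fin n) => desNum n σ = d).card =
    (univ.filter fun σ : Equiv.Perm (Fin n) => excNum n σ = d).card := by
  intro n
  induction n with
  | zero =>
    intro d
    apply congrArg
    apply Finset.filter_congr
    intro σ _
    have h1 : desNum 0 σ = 0 := by simp [desNum, desSet]
    have h2 : excNum 0 σ = 0 := by simp [excNum]
    rw [h1, h2]
  | succ m ih =>
    intro d
    rw [des_step, exc_step]
    have hdes : ∀ τ : Equiv.Perm (Fin m), τ ∈ (univ : Finset (Equiv.Perm (Fin m))) →
        desNum m τ ∈ Finset.range (m+1) := by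
      intro τ _
      rw [Finset.mem_range]
      have : desNum m τ ≤ (Finset.range (m-1)).card := Finset.card_filter_le _ _
      rw [Finset.card_range] at this
      omega
    have hexc : ∀ τ : Equiv.Perm (Fin m), τ ∈ (univ : Finset (Equiv.Perm (Fin m))) →
        excNum m τ ∈ Finset.range (m+1) := by
      intro τ _
      rw [Finset.mem_range]
      have : excNum m τ ≤ (Finset.range m).card := Finset.card_filter_le _ _
      rw [Finset.card_range] at this
      omega
    rw [← Finset.sum_fiberwise_of_maps_to hdes (fun τ => Fc m d (desNum m τ)),
        ← Finset.sum_fiberwise_of_maps_to hexc (fun τ => Fc m d (excNum m τ))]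
    apply Finset.sum_congr rfl
    intro v _
    have e1 : ∑ τ ∈ univ.filter (fun τ : Equiv.Perm (Fin m) => desNum m τ = v),
        Fc m d (desNum m τ) = (univ.filter fun τ : Equiv.Perm (Fin m) => desNum m τ = v).card * Fc m d v := by
      rw [Finset.sum_congr rfl (fun τ hτ => by rw [(Finset.mem_filter.mp hτ).2]),
        Finset.sum_const, smul_eq_mul]
    have e2 : ∑ τ ∈ univ.filter (fun τ : Equiv.Perm (Fin m) => excNum m τ = v),
        Fc m d (excNum m τ) = (univ.filter fun τ : Equiv.Perm (Fin m) => excNum m τ = v).card * Fc m d v := by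
      rw [Finset.sum_congr rfl (fun τ hτ => by rw [(Finset.mem_filter.mp hτ).2]),
        Finset.sum_const, smul_eq_mul]
    rw [e1, e2, ih v]


theorem des_exc_equidistributed (n : ℕ) (hn : 1 ≤ n) :
    (∑ σ : Equiv.Perm (Fin n), (X : Polynomial ℤ) ^ desNum n σ) =
    ∑ σ : Equiv.Perm (Fin n), (X : Polynomial ℤ) ^ excNum n σ := by
  have hdes : ∀ σ : Equiv.Perm (Fin n), σ ∈ (univ : Finset (Equiv.Perm (Fin n))) →
      desNum n σ ∈ Finset.range (n+1) := by
    intro σ _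
    rw [Finset.mem_range]
    have : desNum n σ ≤ (Finset.range (n-1)).card := Finset.card_filter_le _ _
    rw [Finset.card_range] at this
    omega
  have hexc : ∀ σ : Equiv.Perm (Fin n), σ ∈ (univ : Finset (Equiv.Perm (Fin n))) →
      excNum n σ ∈ Finset.range (n+1) := by
    intro σ _
    rw [Finset.mem_range]
    have : excNum n σ ≤ (Finset.range n).card := Finset.card_filter_le _ _
    rw [Finset.card_range] at this
    omega
  rw [← Finset.sum_fiberwise_of_maps_to hdes (fun σ => (X : Polynomial ℤ) ^ desNum n σ),
      ← Finset.sum_fiberwise_of_maps_to hexc (fun σ => (X : Polynomial ℤ) ^ excNum n σ)]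
  apply Finset.sum_congr rfl
  intro d _
  have e1 : ∑ σ ∈ univ.filter (fun σ : Equiv.Perm (Fin n) => desNum n σ = d),
      (X : Polynomial ℤ) ^ desNum n σ =
      (univ.filter fun σ : Equiv.Perm (Fin n) => desNum n σ = d).card • (X : Polynomial ℤ) ^ d := by
    rw [Finset.sum_congr rfl (fun σ hσ => by rw [(Finset.mem_filter.mp hσ).2]), Finset.sum_const]
  have e2 : ∑ σ ∈ univ.filter (fun σ : Equiv.Perm (Fin n) => excNum n σ = d),
      (X : Polynomial ℤ) ^ excNum n σ =
      (univ.filter fun σ : Equiv.Perm (Fin n) => excNum n σ = d).card • (X : Polynomial ℤ) ^ d := by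
    rw [Finset.sum_congr rfl (fun σ hσ => by rw [(Finset.mem_filter.mp hσ).2]), Finset.sum_const]
  rw [e1, e2, equid n d]
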